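/- In the logistic regression model, the function W(s) := F(Ωs) is continuously differentiable on R^d and its gradient satisfies, for every s ∈ R^d, ∇W(s) = −Ω h(s), where h(s) := (1/n) Σ_{i=1}^n ∫_R 𝗌_i(z) p_i(z; Ωs) dz − s. -/

import Mathlib

open Matrix Real MeasureTheory
open scoped BigOperators

noncomputable section

/-- `‖X_i‖`, the Euclidean norm of the covariate vector. -/
def nrmX {d : ℕ} (Xi : Fin d → ℝ) : ℝ := Real.sqrt (Xi ⬝ᵥ Xi)

/-- `𝗌_i(z) := z X_i / (‖X_i‖ σ²)`. -/
def sStat {d : ℕ} (Xi : Fin d → ℝ) (σ : ℝ) (z : ℝ) : Fin d → ℝ :=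
  (z / (nrmX Xi * σ ^ 2)) • Xi

/-- `Ω := ((1/(σ²n)) ∑_i X_i X_iᵀ/‖X_i‖² + 2τ I_d)⁻¹`. -/
def OmegaMat (d n : ℕ) (X : Fin n → Fin d → ℝ) (σ τ : ℝ) : Matrix (Fin d) (Fin d) ℝ :=
  ((σ ^ 2 * (n : ℝ))⁻¹ • ∑ i, (X i ⬝ᵥ X i)⁻¹ • vecMulVec (X i) (X i)
      + (2 * τ) • (1 : Matrix (Fin d) (Fin d) ℝ))⁻¹

/-- `R(θ) := (1/2) θᵀ Ω⁻¹ θ`. -/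
def Rpen (d n : ℕ) (X : Fin n → Fin d → ℝ) (σ τ : ℝ) (θ : Fin d → ℝ) : ℝ :=
  (1 / 2) * (θ ⬝ᵥ (OmegaMat d n X σ τ)⁻¹.mulVec θ)

/-- The objective `F`: normalized negative penalized log-likelihood of the logistic
regression model with Gaussian predictors, written with one-dimensional integrals. -/
def Fobj (d n : ℕ) (X : Fin n → Fin d → ℝ) (y : Fin n → ℝ) (σ τ : ℝ) (θ : Fin d → ℝ) : ℝ :=
  -(n : ℝ)⁻¹ * ∑ i, Real.log (∫ z : ℝ,
      (1 + Real.exp (-(y i * nrmX (X i) * z)))⁻¹ * Real.exp (sStat (X i) σ z ⬝ᵥ θ)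
        * Real.exp (-z ^ 2 / (2 * σ ^ 2)))
    + Rpen d n X σ τ θ

/-- The probability density `z ↦ p_i(z; θ)` on `ℝ`, proportional to
`z ↦ (1 + exp(−y_i‖X_i‖z))⁻¹ exp(⟨𝗌_i(z),θ⟩ − z²/(2σ²))`. -/
def pdens (d : ℕ) (Xi : Fin d → ℝ) (σ : ℝ) (yi : ℝ) (θ : Fin d → ℝ) (z : ℝ) : ℝ :=
  ((1 + Real.exp (-(yi * nrmX Xi * z)))⁻¹ * Real.exp (sStat Xi σ z ⬝ᵥ θ - z ^ 2 / (2 * σ ^ 2)))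
    / ∫ z' : ℝ, (1 + Real.exp (-(yi * nrmX Xi * z')))⁻¹
        * Real.exp (sStat Xi σ z' ⬝ᵥ θ - z' ^ 2 / (2 * σ ^ 2))

/-- The EM mean-field map `h(s) := (1/n) ∑_i ∫_ℝ 𝗌_i(z) p_i(z; Ωs) dz − s`. -/
def hEM (d n : ℕ) (X : Fin n → Fin d → ℝ) (y : Fin n → ℝ) (σ τ : ℝ) (s : Fin d → ℝ) :
    Fin d → ℝ :=
  (n : ℝ)⁻¹ • ∑ i, (∫ z : ℝ,
      pdens d (X i) σ (y i) ((OmegaMat d n X σ τ).mulVec s) z • sStat (X i) σ z) - s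


def gfun (b z : ℝ) : ℝ := (1 + Real.exp (-(b * z)))⁻¹

lemma gfun_pos (b z : ℝ) : 0 < gfun b z := by unfold gfun; positivity

lemma gfun_le_one (b z : ℝ) : gfun b z ≤ 1 := by
  unfold gfun
  rw [inv_le_one_iff₀]
  right; nlinarith [Real.exp_pos (-(b*z))]

lemma continuous_gfun (b : ℝ) : Continuous (gfun b) := by
  unfold gfun
  fun_prop (disch := intros; positivity)

def Ker (σ c z : ℝ) : ℝ := Real.exp (c * z - z ^ 2 / (2 * σ ^ 2))

lemma Ker_pos (σ c z : ℝ) : 0 < Ker σ c z := Real.exp_pos _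

lemma integrable_exp_abs_sub_sq {σ : ℝ} (hσ : 0 < σ) (a : ℝ) :
    Integrable (fun z : ℝ => Real.exp (a * |z| - z ^ 2 / (2 * σ ^ 2))) := by
  have h4 : (0:ℝ) < (4 * σ ^ 2)⁻¹ := by positivity
  have hint : Integrable (fun z : ℝ => Real.exp (a ^ 2 * σ ^ 2) * Real.exp (-(4 * σ ^ 2)⁻¹ * z ^ 2)) :=
    (integrable_exp_neg_mul_sq h4).const_mul _
  refine hint.mono' (by apply Continuous.aestronglyMeasurable; fun_prop) ?_
  filter_upwards with z
  rw [Real.norm_eq_abs, abs_of_pos (Real.exp_pos _), ← Real.exp_add]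
  apply Real.exp_le_exp.2
  rw [div_eq_mul_inv]
  have h1 : (4 * σ ^ 2) * (4 * σ ^ 2)⁻¹ = 1 := mul_inv_cancel₀ (by positivity)
  have h2 : (2 * σ ^ 2) * (2 * σ ^ 2)⁻¹ = 1 := mul_inv_cancel₀ (by positivity)
  nlinarith [mul_nonneg (sq_nonneg (2*a*σ^2 - |z|)) h4.le, sq_abs z, sq_nonneg z, pow_pos hσ 2, mul_pos h4 h4]

/-- key bound: for `|c| ≤ a`, `|z|^k * g * Ker σ c z ≤ exp ((a+k)|z| - z²/(2σ²))`, used with k=0,1. -/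
lemma gKer_bound {σ : ℝ} (b a c z : ℝ) (hc : |c| ≤ a) (k : ℕ) :
    |z| ^ k * (gfun b z * Ker σ c z) ≤ Real.exp ((a + k) * |z| - z ^ 2 / (2 * σ ^ 2)) := by
  have h1 : |z| ^ k * (gfun b z * Ker σ c z) ≤ |z| ^ k * Ker σ c z := by
    have := Ker_pos σ c z
    have := gfun_le_one b z
    have := (gfun_pos b z).le
    have : gfun b z * Ker σ c z ≤ Ker σ c z := by nlinarith
    exact mul_le_mul_of_nonneg_left this (by positivity)
  refine h1.trans ?_
  have h2 : |z| ^ k ≤ Real.exp ((k:ℝ) * |z|) := by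
    calc |z| ^ k ≤ Real.exp |z| ^ k := pow_le_pow_left₀ (abs_nonneg z)
          ((Real.add_one_le_exp |z|).trans' (by linarith [abs_nonneg z])) k
    _ = Real.exp ((k:ℝ) * |z|) := by rw [← Real.exp_nat_mul]
  have h3 : Ker σ c z ≤ Real.exp (a * |z| - z ^ 2 / (2 * σ ^ 2)) := by
    apply Real.exp_le_exp.2
    have : c * z ≤ a * |z| := by
      calc c * z ≤ |c * z| := le_abs_self _
      _ = |c| * |z| := abs_mul c z
      _ ≤ a * |z| := mul_le_mul_of_nonneg_right hc (abs_nonneg z)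
    linarith
  calc |z| ^ k * Ker σ c z ≤ Real.exp ((k:ℝ) * |z|) * Real.exp (a * |z| - z ^ 2 / (2 * σ ^ 2)) :=
        mul_le_mul h2 h3 (Ker_pos σ c z).le (Real.exp_pos _).le
  _ = Real.exp ((a + k) * |z| - z ^ 2 / (2 * σ ^ 2)) := by rw [← Real.exp_add]; ring_nf

lemma integrable_gKer {σ : ℝ} (hσ : 0 < σ) (b c : ℝ) :
    Integrable (fun z : ℝ => gfun b z * Ker σ c z) := by
  refine (integrable_exp_abs_sub_sq hσ (|c| + 0)).mono'
    (by apply Continuous.aestronglyMeasurable; unfold Ker; exact (continuous_gfun b).mul (by fun_prop)) ?_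
  filter_upwards with z
  rw [Real.norm_eq_abs, abs_of_pos (mul_pos (gfun_pos b z) (Ker_pos σ c z))]
  simpa using gKer_bound b |c| c z le_rfl 0

lemma integrable_z_gKer {σ : ℝ} (hσ : 0 < σ) (b c : ℝ) :
    Integrable (fun z : ℝ => z * (gfun b z * Ker σ c z)) := by
  refine (integrable_exp_abs_sub_sq hσ (|c| + 1)).mono'
    (by apply Continuous.aestronglyMeasurable; unfold Ker; exact continuous_id.mul ((continuous_gfun b).mul (by fun_prop))) ?_
  filter_upwards with z
  rw [Real.norm_eq_abs, abs_mul, abs_of_pos (mul_pos (gfun_pos b z) (Ker_pos σ c z))]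
  simpa using gKer_bound b |c| c z le_rfl 1

def phiI (σ b c : ℝ) : ℝ := ∫ z : ℝ, gfun b z * Ker σ c z

def psiI (σ b c : ℝ) : ℝ := ∫ z : ℝ, z * (gfun b z * Ker σ c z)

lemma phiI_pos {σ : ℝ} (hσ : 0 < σ) (b c : ℝ) : 0 < phiI σ b c := by
  rw [phiI, integral_pos_iff_support_of_nonneg_ae]
  · have : Function.support (fun z : ℝ => gfun b z * Ker σ c z) = Set.univ := by
      ext z; simp only [Function.mem_support, Set.mem_univ, iff_true]
      exact (mul_pos (gfun_pos b z) (Ker_pos σ c z)).ne'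
    rw [this]; simp
  · filter_upwards with z; exact (mul_pos (gfun_pos b z) (Ker_pos σ c z)).le
  · exact integrable_gKer hσ b c

lemma hasDerivAt_phiI {σ : ℝ} (hσ : 0 < σ) (b c : ℝ) :
    HasDerivAt (phiI σ b) (psiI σ b c) c := by
  have := hasDerivAt_integral_of_dominated_loc_of_deriv_le (μ := volume)
    (F := fun c z => gfun b z * Ker σ c z) (F' := fun c z => z * (gfun b z * Ker σ c z))
    (x₀ := c) (bound := fun z => Real.exp ((|c| + 1 + 1) * |z| - z ^ 2 / (2 * σ ^ 2)))
    (Metric.ball_mem_nhds c one_pos) ?_ (integrable_gKer hσ b c) ?_ ?_ (integrable_exp_abs_sub_sq hσ _) ?_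
  · exact this.2
  · filter_upwards with c'
    exact (Continuous.aestronglyMeasurable (by unfold Ker; exact (continuous_gfun b).mul (by fun_prop)))
  · exact (Continuous.aestronglyMeasurable (by unfold Ker; exact continuous_id.mul ((continuous_gfun b).mul (by fun_prop))))
  · filter_upwards with z c' hc'
    rw [Real.norm_eq_abs, abs_mul, abs_of_pos (mul_pos (gfun_pos b z) (Ker_pos σ c' z))]
    have hcc : |c'| ≤ |c| + 1 := by
      have := abs_sub_abs_le_abs_sub c' c
      simp [Metric.mem_ball, Real.dist_eq] at hc'
      linarith [le_of_lt hc']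
    simpa using gKer_bound b (|c|+1) c' z hcc 1
  · filter_upwards with z c' _
    have h1 : HasDerivAt (fun c => c * z - z ^ 2 / (2 * σ ^ 2)) z c' := by
      simpa using ((hasDerivAt_id c').mul_const z).sub_const (z ^ 2 / (2 * σ ^ 2))
    have h2 : HasDerivAt (fun c => Ker σ c z) (Real.exp (c' * z - z ^ 2 / (2 * σ ^ 2)) * z) c' :=
      h1.exp
    have := h2.const_mul (gfun b z)
    convert this using 1
    · rfl
    unfold Ker; ring

lemma continuous_psiI {σ : ℝ} (hσ : 0 < σ) (b : ℝ) : Continuous (psiI σ b) := by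
  rw [continuous_iff_continuousAt]
  intro c
  apply continuousAt_of_dominated (bound := fun z => Real.exp ((|c| + 1 + 1) * |z| - z ^ 2 / (2 * σ ^ 2)))
  · filter_upwards with c'
    exact (Continuous.aestronglyMeasurable (by unfold Ker; exact continuous_id.mul ((continuous_gfun b).mul (by fun_prop))))
  · filter_upwards [Metric.ball_mem_nhds c one_pos] with c' hc'
    filter_upwards with z
    rw [Real.norm_eq_abs, abs_mul, abs_of_pos (mul_pos (gfun_pos b z) (Ker_pos σ c' z))]
    have hcc : |c'| ≤ |c| + 1 := by
      have := abs_sub_abs_le_abs_sub c' c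
      simp [Metric.mem_ball, Real.dist_eq] at hc'
      linarith
    simpa using gKer_bound b (|c|+1) c' z hcc 1
  · exact integrable_exp_abs_sub_sq hσ _
  · filter_upwards with z
    apply Continuous.continuousAt
    unfold Ker
    fun_prop

lemma continuous_phiI {σ : ℝ} (hσ : 0 < σ) (b : ℝ) : Continuous (phiI σ b) :=
  continuous_iff_continuousAt.2 fun c => ((hasDerivAt_phiI hσ b c).continuousAt)

lemma hasDerivAt_log_phiI {σ : ℝ} (hσ : 0 < σ) (b c : ℝ) :
    HasDerivAt (fun c => Real.log (phiI σ b c)) (psiI σ b c / phiI σ b c) c :=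
  (hasDerivAt_phiI hσ b c).log (phiI_pos hσ b c).ne'



lemma dotProduct_self_pos {d : ℕ} {Xi : Fin d → ℝ} (h : Xi ≠ 0) : 0 < Xi ⬝ᵥ Xi := by
  have hnn : 0 ≤ Xi ⬝ᵥ Xi := Finset.sum_nonneg fun j _ => mul_self_nonneg _
  rcases lt_or_eq_of_le hnn with h1 | h1
  · exact h1
  · exact absurd (dotProduct_self_eq_zero.1 h1.symm) h

lemma nrmX_pos {d : ℕ} {Xi : Fin d → ℝ} (h : Xi ≠ 0) : 0 < nrmX Xi :=
  Real.sqrt_pos.2 (dotProduct_self_pos h)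

lemma vecMulVec_mulVec' {d : ℕ} (u v x : Fin d → ℝ) :
    vecMulVec u v *ᵥ x = (v ⬝ᵥ x) • u := by
  funext i
  simp [Matrix.mulVec, vecMulVec_apply, dotProduct, Finset.mul_sum, Finset.sum_mul,
    mul_comm, mul_assoc, mul_left_comm]

lemma sum_mulVec' {d n : ℕ} (M : Fin n → Matrix (Fin d) (Fin d) ℝ) (x : Fin d → ℝ) :
    (∑ i, M i) *ᵥ x = ∑ i, M i *ᵥ x := by
  funext j
  simp only [Matrix.mulVec, dotProduct, Matrix.sum_apply, Finset.sum_mul]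
  rw [Finset.sum_comm]
  simp [Matrix.mulVec, dotProduct, Finset.sum_apply]

lemma dotProduct_sum' {d n : ℕ} (x : Fin d → ℝ) (f : Fin n → Fin d → ℝ) :
    x ⬝ᵥ (∑ i, f i) = ∑ i, x ⬝ᵥ f i := by
  simp only [dotProduct, Finset.sum_apply, Finset.mul_sum]
  rw [Finset.sum_comm]

def Amat (d n : ℕ) (X : Fin n → Fin d → ℝ) (σ τ : ℝ) : Matrix (Fin d) (Fin d) ℝ :=
  (σ ^ 2 * (n : ℝ))⁻¹ • ∑ i, (X i ⬝ᵥ X i)⁻¹ • vecMulVec (X i) (X i)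
      + (2 * τ) • (1 : Matrix (Fin d) (Fin d) ℝ)

lemma Amat_transpose (d n : ℕ) (X : Fin n → Fin d → ℝ) (σ τ : ℝ) :
    (Amat d n X σ τ)ᵀ = Amat d n X σ τ := by
  unfold Amat
  rw [transpose_add, transpose_smul, transpose_smul, transpose_one, transpose_sum]
  congr 2
  apply Finset.sum_congr rfl
  intro i _
  rw [transpose_smul]
  congr 1
  ext a b
  simp [Matrix.transpose_apply, vecMulVec_apply, mul_comm]

lemma Amat_mulVec (d n : ℕ) (X : Fin n → Fin d → ℝ) (σ τ : ℝ) (x : Fin d → ℝ) :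
    Amat d n X σ τ *ᵥ x
      = (σ ^ 2 * (n : ℝ))⁻¹ • ∑ i, ((X i ⬝ᵥ X i)⁻¹ * (X i ⬝ᵥ x)) • X i + (2 * τ) • x := by
  unfold Amat
  rw [add_mulVec, smul_mulVec, smul_mulVec, one_mulVec, sum_mulVec']
  congr 2
  apply Finset.sum_congr rfl
  intro i _
  rw [smul_mulVec, vecMulVec_mulVec', smul_smul]

lemma Amat_quad_ge (d n : ℕ) (X : Fin n → Fin d → ℝ) (σ τ : ℝ) (hτ : 0 ≤ τ) (x : Fin d → ℝ) :
    2 * τ * (x ⬝ᵥ x) ≤ x ⬝ᵥ Amat d n X σ τ *ᵥ x := by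
  rw [Amat_mulVec, dotProduct_add, dotProduct_smul, dotProduct_smul]
  have h1 : 0 ≤ x ⬝ᵥ ∑ i, ((X i ⬝ᵥ X i)⁻¹ * (X i ⬝ᵥ x)) • X i := by
    rw [dotProduct_sum']
    apply Finset.sum_nonneg
    intro i _
    rw [dotProduct_smul, smul_eq_mul, mul_assoc]
    have hx2 : x ⬝ᵥ X i = X i ⬝ᵥ x := dotProduct_comm x (X i)
    rw [hx2, ← sq]
    have : (0:ℝ) ≤ (X i ⬝ᵥ X i)⁻¹ := by
      apply inv_nonneg.2
      exact Finset.sum_nonneg fun j _ => mul_self_nonneg _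
    positivity
  have h2 : (0:ℝ) ≤ (σ ^ 2 * (n : ℝ))⁻¹ := by positivity
  have := mul_nonneg h2 h1
  simp only [smul_eq_mul]
  linarith

lemma Amat_isUnit (d n : ℕ) (X : Fin n → Fin d → ℝ) (σ τ : ℝ) (hτ : 0 < τ) :
    IsUnit (Amat d n X σ τ) := by
  rw [← Matrix.mulVec_injective_iff_isUnit]
  intro u v huv
  have h0 : Amat d n X σ τ *ᵥ (u - v) = 0 := by
    rw [Matrix.mulVec_sub, huv, sub_self]
  have h1 : 2 * τ * ((u - v) ⬝ᵥ (u - v)) ≤ 0 := by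
    have := Amat_quad_ge d n X σ τ hτ.le (u - v)
    rwa [h0, dotProduct_zero] at this
  have h2 : 0 ≤ (u - v) ⬝ᵥ (u - v) := Finset.sum_nonneg fun j _ => mul_self_nonneg _
  have h3 : (u - v) ⬝ᵥ (u - v) = 0 := le_antisymm (by nlinarith) h2
  have := dotProduct_self_eq_zero.1 h3
  exact sub_eq_zero.1 this

def dotCLM {d : ℕ} (w : Fin d → ℝ) : (Fin d → ℝ) →L[ℝ] ℝ :=
  LinearMap.toContinuousLinearMap
    { toFun := fun v => w ⬝ᵥ v
      map_add' := fun a b => dotProduct_add w a b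
      map_smul' := fun c a => dotProduct_smul c w a }

@[simp] lemma dotCLM_apply {d : ℕ} (w v : Fin d → ℝ) : dotCLM w v = w ⬝ᵥ v := rfl

lemma continuous_dotCLM (d : ℕ) : Continuous (fun w : Fin d → ℝ => dotCLM w) := by
  have : IsLinearMap ℝ (fun w : Fin d → ℝ => dotCLM w) := by
    constructor
    · intro a b; apply ContinuousLinearMap.ext; intro v
      simp [add_dotProduct]
    · intro c a; apply ContinuousLinearMap.ext; intro v
      simp [smul_dotProduct]
  exact LinearMap.continuous_of_finiteDimensional this.mk'


section Main

variable (d n : ℕ) (X : Fin n → Fin d → ℝ) (y : Fin n → ℝ) (σ τ : ℝ)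

/-- The effective linear functional: `c_i(s) = wVec i ⬝ᵥ s`. -/
def wVec (i : Fin n) : Fin d → ℝ :=
  (nrmX (X i) * σ ^ 2)⁻¹ • (OmegaMat d n X σ τ *ᵥ X i)

lemma OmegaMat_eq : OmegaMat d n X σ τ = (Amat d n X σ τ)⁻¹ := rfl

lemma Amat_det_isUnit (hτ : 0 < τ) : IsUnit (Amat d n X σ τ).det :=
  (Matrix.isUnit_iff_isUnit_det _).1 (Amat_isUnit d n X σ τ hτ)

lemma Omega_inv (hτ : 0 < τ) : (OmegaMat d n X σ τ)⁻¹ = Amat d n X σ τ := by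
  rw [OmegaMat_eq]
  exact Matrix.nonsing_inv_nonsing_inv _ (Amat_det_isUnit d n X σ τ hτ)

lemma Amat_mul_Omega (hτ : 0 < τ) : Amat d n X σ τ * OmegaMat d n X σ τ = 1 := by
  rw [OmegaMat_eq]
  exact Matrix.mul_nonsing_inv _ (Amat_det_isUnit d n X σ τ hτ)

lemma Omega_transpose (hτ : 0 < τ) : (OmegaMat d n X σ τ)ᵀ = OmegaMat d n X σ τ := by
  rw [OmegaMat_eq, Matrix.transpose_nonsing_inv, Amat_transpose]

lemma Omega_dot_symm (hτ : 0 < τ) (x v : Fin d → ℝ) :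
    (OmegaMat d n X σ τ *ᵥ x) ⬝ᵥ v = x ⬝ᵥ (OmegaMat d n X σ τ *ᵥ v) := by
  rw [dotProduct_mulVec, ← Omega_transpose d n X σ τ hτ, Matrix.vecMul_transpose,
    Omega_transpose d n X σ τ hτ]

lemma wVec_dot (hτ : 0 < τ) (i : Fin n) (s : Fin d → ℝ) :
    wVec d n X σ τ i ⬝ᵥ s = (nrmX (X i) * σ ^ 2)⁻¹ * (X i ⬝ᵥ (OmegaMat d n X σ τ *ᵥ s)) := by
  unfold wVec
  rw [smul_dotProduct, Omega_dot_symm d n X σ τ hτ, smul_eq_mul]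

lemma integrand_eq (i : Fin n) (θ : Fin d → ℝ) (z : ℝ) :
    (1 + Real.exp (-(y i * nrmX (X i) * z)))⁻¹ * Real.exp (sStat (X i) σ z ⬝ᵥ θ)
        * Real.exp (-z ^ 2 / (2 * σ ^ 2))
      = gfun (y i * nrmX (X i)) z * Ker σ ((nrmX (X i) * σ ^ 2)⁻¹ * (X i ⬝ᵥ θ)) z := by
  unfold gfun Ker sStat
  rw [mul_assoc, ← Real.exp_add, smul_dotProduct, smul_eq_mul]
  congr 2
  ring

lemma integrand_eq' (i : Fin n) (θ : Fin d → ℝ) (z : ℝ) :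
    (1 + Real.exp (-(y i * nrmX (X i) * z)))⁻¹
        * Real.exp (sStat (X i) σ z ⬝ᵥ θ - z ^ 2 / (2 * σ ^ 2))
      = gfun (y i * nrmX (X i)) z * Ker σ ((nrmX (X i) * σ ^ 2)⁻¹ * (X i ⬝ᵥ θ)) z := by
  unfold gfun Ker sStat
  rw [smul_dotProduct, smul_eq_mul]
  congr 2
  ring

lemma Fobj_comp (hτ : 0 < τ) (s : Fin d → ℝ) :
    Fobj d n X y σ τ (OmegaMat d n X σ τ *ᵥ s)
      = -(n:ℝ)⁻¹ * ∑ i, Real.log (phiI σ (y i * nrmX (X i)) (wVec d n X σ τ i ⬝ᵥ s))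
          + (1/2) * ((OmegaMat d n X σ τ *ᵥ s) ⬝ᵥ s) := by
  unfold Fobj Rpen
  congr 1
  · congr 1
    apply Finset.sum_congr rfl
    intro i _
    congr 1
    rw [wVec_dot d n X σ τ hτ]
    unfold phiI
    congr 1
    funext z
    exact integrand_eq d n X y σ i _ z
  · rw [Omega_inv d n X σ τ hτ, Matrix.mulVec_mulVec, Amat_mul_Omega d n X σ τ hτ, one_mulVec]

lemma mulVec_sum' {d n : ℕ} (M : Matrix (Fin d) (Fin d) ℝ) (v : Fin n → Fin d → ℝ) :
    M *ᵥ (∑ i, v i) = ∑ i, M *ᵥ v i := by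
  funext j
  simp only [Matrix.mulVec, dotProduct, Finset.sum_apply, Finset.mul_sum]
  rw [Finset.sum_comm]

lemma sum_dotProduct' {d n : ℕ} (f : Fin n → Fin d → ℝ) (x : Fin d → ℝ) :
    (∑ i, f i) ⬝ᵥ x = ∑ i, f i ⬝ᵥ x := by
  rw [dotProduct_comm, dotProduct_sum']
  simp [dotProduct_comm]

/-- the weight appearing in `hEM`. -/
def rhoW (i : Fin n) (s : Fin d → ℝ) : ℝ :=
  psiI σ (y i * nrmX (X i)) (wVec d n X σ τ i ⬝ᵥ s)
    / (phiI σ (y i * nrmX (X i)) (wVec d n X σ τ i ⬝ᵥ s) * (nrmX (X i) * σ ^ 2))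

lemma hEM_eq (hσ : 0 < σ) (hτ : 0 < τ) (s : Fin d → ℝ) :
    hEM d n X y σ τ s = (n:ℝ)⁻¹ • ∑ i, rhoW d n X y σ τ i s • X i - s := by
  unfold hEM
  congr 2
  apply Finset.sum_congr rfl
  intro i _
  set c := wVec d n X σ τ i ⬝ᵥ s with hc
  set b := y i * nrmX (X i) with hb
  have hnum : ∀ z : ℝ,
      pdens d (X i) σ (y i) (OmegaMat d n X σ τ *ᵥ s) z
        = gfun b z * Ker σ c z / phiI σ b c := by
    intro z
    unfold pdens
    rw [integrand_eq' d n X y σ i _ z, ← wVec_dot d n X σ τ hτ]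
    congr 1
    unfold phiI
    congr 1
    funext z'
    rw [integrand_eq' d n X y σ i _ z', ← wVec_dot d n X σ τ hτ]
  have hrw : (fun z : ℝ => pdens d (X i) σ (y i) (OmegaMat d n X σ τ *ᵥ s) z • sStat (X i) σ z)
      = fun z : ℝ => ((z * (gfun b z * Ker σ c z)) * (phiI σ b c * (nrmX (X i) * σ ^ 2))⁻¹) • X i := by
    funext z
    rw [hnum z]
    unfold sStat
    rw [smul_smul]
    congr 1
    field_simp
  rw [hrw, integral_smul_const, integral_mul_const]
  unfold rhoW psiI
  rw [← hc, ← hb, div_eq_mul_inv]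

end Main


section Main2

variable (d n : ℕ) (X : Fin n → Fin d → ℝ) (y : Fin n → ℝ) (σ τ : ℝ)

lemma W_hasFDerivAt (hX : ∀ i, X i ≠ 0) (hσ : 0 < σ) (hτ : 0 < τ) (s : Fin d → ℝ) :
    HasFDerivAt (fun s : Fin d → ℝ => Fobj d n X y σ τ (OmegaMat d n X σ τ *ᵥ s))
      (dotCLM (-(OmegaMat d n X σ τ *ᵥ hEM d n X y σ τ s))) s := by
  set Ω := OmegaMat d n X σ τ with hΩ
  have hfun : (fun s : Fin d → ℝ => Fobj d n X y σ τ (Ω *ᵥ s))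
      = fun s : Fin d → ℝ =>
          -(n:ℝ)⁻¹ * ∑ i, Real.log (phiI σ (y i * nrmX (X i)) (wVec d n X σ τ i ⬝ᵥ s))
          + (1/2) * ∑ j, (dotCLM (Ω j) s) * (dotCLM (Pi.single j (1:ℝ)) s) := by
    funext s
    rw [Fobj_comp d n X y σ τ hτ s]
    congr 1
    congr 1
    simp only [dotCLM_apply, single_dotProduct, one_mul]
    simp [Matrix.mulVec, dotProduct]
    rfl
  rw [hfun]
  have h1 : ∀ i : Fin n, HasFDerivAt
      (fun s : Fin d → ℝ => Real.log (phiI σ (y i * nrmX (X i)) (wVec d n X σ τ i ⬝ᵥ s)))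
      ((psiI σ (y i * nrmX (X i)) (wVec d n X σ τ i ⬝ᵥ s)
          / phiI σ (y i * nrmX (X i)) (wVec d n X σ τ i ⬝ᵥ s)) • dotCLM (wVec d n X σ τ i)) s :=
    fun i => (hasDerivAt_log_phiI hσ (y i * nrmX (X i)) (wVec d n X σ τ i ⬝ᵥ s)).comp_hasFDerivAt
      s ((dotCLM (wVec d n X σ τ i)).hasFDerivAt)
  have hpart1 := (HasFDerivAt.fun_sum (fun i (_ : i ∈ Finset.univ) => h1 i)).const_mul (-(n:ℝ)⁻¹)
  have hqj : ∀ j : Fin d, HasFDerivAt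
      (fun s : Fin d → ℝ => (dotCLM (Ω j) s) * (dotCLM (Pi.single j (1:ℝ)) s))
      (dotCLM (Ω j) s • dotCLM (Pi.single j (1:ℝ))
        + dotCLM (Pi.single j (1:ℝ)) s • dotCLM (Ω j)) s :=
    fun j => ((dotCLM (Ω j)).hasFDerivAt).mul ((dotCLM (Pi.single j (1:ℝ))).hasFDerivAt)
  have hpart2 := (HasFDerivAt.fun_sum (fun j (_ : j ∈ Finset.univ) => hqj j)).const_mul ((1:ℝ)/2)
  have htot := hpart1.add hpart2
  refine htot.congr_fderiv ?_
  symm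
  apply ContinuousLinearMap.ext
  intro v
  simp only [ContinuousLinearMap.add_apply, ContinuousLinearMap.smul_apply,
    ContinuousLinearMap.coe_sum', Finset.sum_apply, dotCLM_apply, smul_eq_mul,
    single_dotProduct, one_mul]
  -- abbreviations
  have hsum2 : ∑ j, ((Ω j ⬝ᵥ s) * v j + s j * (Ω j ⬝ᵥ v))
      = (Ω *ᵥ s) ⬝ᵥ v + s ⬝ᵥ (Ω *ᵥ v) := by
    rw [Finset.sum_add_distrib]
    congr 1 <;> simp [Matrix.mulVec, dotProduct]
  have hWv : ∀ i, wVec d n X σ τ i ⬝ᵥ v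
      = (nrmX (X i) * σ ^ 2)⁻¹ * ((Ω *ᵥ X i) ⬝ᵥ v) := by
    intro i
    unfold wVec
    rw [smul_dotProduct, smul_eq_mul, ← hΩ]
  have hrho : ∀ i, rhoW d n X y σ τ i s
      = (psiI σ (y i * nrmX (X i)) (wVec d n X σ τ i ⬝ᵥ s)
          / phiI σ (y i * nrmX (X i)) (wVec d n X σ τ i ⬝ᵥ s)) * (nrmX (X i) * σ ^ 2)⁻¹ := by
    intro i
    unfold rhoW
    rw [← div_div, div_eq_mul_inv]
  have hEMv : (-(Ω *ᵥ hEM d n X y σ τ s)) ⬝ᵥ v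
      = -((n:ℝ)⁻¹ * ∑ i, rhoW d n X y σ τ i s * ((Ω *ᵥ X i) ⬝ᵥ v) - (Ω *ᵥ s) ⬝ᵥ v) := by
    rw [hEM_eq d n X y σ τ hσ hτ s, Matrix.mulVec_sub, neg_dotProduct,
      sub_dotProduct]
    congr 2
    rw [Matrix.mulVec_smul, mulVec_sum', smul_dotProduct, sum_dotProduct', smul_eq_mul]
    congr 1
    apply Finset.sum_congr rfl
    intro i _
    rw [Matrix.mulVec_smul, smul_dotProduct, smul_eq_mul]
  rw [hEMv, hsum2]
  have hsym : s ⬝ᵥ (Ω *ᵥ v) = (Ω *ᵥ s) ⬝ᵥ v := (Omega_dot_symm d n X σ τ hτ s v).symm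
  rw [hsym]
  have hS : ∑ i, rhoW d n X y σ τ i s * ((Ω *ᵥ X i) ⬝ᵥ v)
      = ∑ i, (psiI σ (y i * nrmX (X i)) (wVec d n X σ τ i ⬝ᵥ s)
          / phiI σ (y i * nrmX (X i)) (wVec d n X σ τ i ⬝ᵥ s)) * (wVec d n X σ τ i ⬝ᵥ v) := by
    apply Finset.sum_congr rfl
    intro i _
    rw [hrho i, hWv i]
    ring
  rw [hS]
  ring

lemma continuous_hEM (hX : ∀ i, X i ≠ 0) (hσ : 0 < σ) (hτ : 0 < τ) :
    Continuous (fun s : Fin d → ℝ => hEM d n X y σ τ s) := by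
  have hfun : (fun s : Fin d → ℝ => hEM d n X y σ τ s)
      = fun s => (n:ℝ)⁻¹ • ∑ i, rhoW d n X y σ τ i s • X i - s :=
    funext (hEM_eq d n X y σ τ hσ hτ)
  rw [hfun]
  apply Continuous.sub _ continuous_id
  apply Continuous.fun_const_smul
  apply continuous_finset_sum
  intro i _
  apply Continuous.fun_smul _ continuous_const
  unfold rhoW
  have hc : Continuous (fun s : Fin d → ℝ => wVec d n X σ τ i ⬝ᵥ s) :=
    (dotCLM (wVec d n X σ τ i)).continuous
  apply Continuous.div
  · exact (continuous_psiI hσ _).comp hc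
  · exact ((continuous_phiI hσ _).comp hc).mul continuous_const
  · intro s
    apply mul_ne_zero (phiI_pos hσ _ _).ne'
    have := nrmX_pos (hX i)
    positivity

end Main2

/-- In the logistic regression model, `W(s) := F(Ωs)` is continuously
differentiable on `ℝ^d` and `∇W(s) = −Ω h(s)` for every `s`, i.e. the differential of `W`
at `s` is `v ↦ ⟨−Ω h(s), v⟩`. -/
theorem W_contDiff_and_grad
    (d n : ℕ) (hn : 0 < n) (X : Fin n → Fin d → ℝ) (hX : ∀ i, X i ≠ 0)
    (y : Fin n → ℝ) (hy : ∀ i, y i = 1 ∨ y i = -1)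
    (σ τ : ℝ) (hσ : 0 < σ) (hτ : 0 < τ) :
    ContDiff ℝ 1 (fun s : Fin d → ℝ => Fobj d n X y σ τ ((OmegaMat d n X σ τ).mulVec s)) ∧
      ∀ s v : Fin d → ℝ,
        fderiv ℝ (fun s : Fin d → ℝ => Fobj d n X y σ τ ((OmegaMat d n X σ τ).mulVec s)) s v
          = (-(OmegaMat d n X σ τ).mulVec (hEM d n X y σ τ s)) ⬝ᵥ v := by
  constructor
  · rw [contDiff_one_iff_fderiv]
    refine ⟨fun s => (W_hasFDerivAt d n X y σ τ hX hσ hτ s).differentiableAt, ?_⟩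
    have hfd : fderiv ℝ
        (fun s : Fin d → ℝ => Fobj d n X y σ τ ((OmegaMat d n X σ τ).mulVec s))
        = fun s => dotCLM (-(OmegaMat d n X σ τ *ᵥ hEM d n X y σ τ s)) :=
      funext fun s => (W_hasFDerivAt d n X y σ τ hX hσ hτ s).fderiv
    rw [hfd]
    have hmv : Continuous (fun x : Fin d → ℝ => OmegaMat d n X σ τ *ᵥ x) := by
      have := LinearMap.continuous_of_finiteDimensional (Matrix.mulVecLin (OmegaMat d n X σ τ))
      simpa [Matrix.mulVecLin_apply, Matrix.coe_mulVecLin] using this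
    exact (continuous_dotCLM d).comp
      ((hmv.comp (continuous_hEM d n X y σ τ hX hσ hτ)).neg)
  · intro s v
    rw [(W_hasFDerivAt d n X y σ τ hX hσ hτ s).fderiv]
    rfl
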